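/- Let r, v ∈ ℝ^n with v ≠ 0, let the reference object be the single point ℛ = {r}, let the vector field be constant equal to v, and let the distribution be 𝒟₂(t) = 1 if −2 ≤ t ≤ 1 and 𝒟₂(t) = 0 otherwise. Then for any point p ∈ ℝ^n, the normalization sum S is nonzero and prob(r) = 1 if and only if −2 ≤ (v · (p − r))/‖v‖ ≤ 1. Hence the pipeline partitions ℝ^n into the closed slab {p : −2‖v‖ ≤ v · (p − r) ≤ ‖v‖} bounded by two parallel hyperplanes orthogonal to v (output 1) and its complement (output 0). -/

import Mathlib

open RealInnerProductSpace

/-- One-point reference object `{r}`, constant vector field `v ≠ 0`, distribution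
`𝒟₂ = indicator of [-2, 1]`. For any point `p`, the normalization sum `S = 𝒟₂(filter r)` is
nonzero with `prob r = 1` if and only if `-2 ≤ ⟪v, p - r⟫ / ‖v‖ ≤ 1`; moreover this condition
describes the closed slab `{p : -2‖v‖ ≤ ⟪v, p - r⟫ ≤ ‖v‖}` bounded by two parallel
hyperplanes orthogonal to `v`. -/
theorem stmt5 {n : ℕ} (r v p : EuclideanSpace ℝ (Fin n)) (hv : v ≠ 0)
    (filter : EuclideanSpace ℝ (Fin n) → ℝ)
    (hfilter : ∀ x : EuclideanSpace ℝ (Fin n),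
      filter x =
        if 0 ≤ ⟪v, p - x⟫ then
          ‖(Submodule.orthogonalProjectionOnto (ℝ ∙ v) (p - x) : EuclideanSpace ℝ (Fin n))‖
        else
          -‖(Submodule.orthogonalProjectionOnto (ℝ ∙ v) (p - x) : EuclideanSpace ℝ (Fin n))‖)
    (D₂ : ℝ → ℝ) (hD₂ : ∀ t : ℝ, D₂ t = if -2 ≤ t ∧ t ≤ 1 then 1 else 0)
    (S : ℝ) (hS : S = D₂ (filter r))
    (prob : EuclideanSpace ℝ (Fin n) → ℝ)
    (hprob : prob r = if S = 0 then 0 else D₂ (filter r) / S) :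
    ((S ≠ 0 ∧ prob r = 1) ↔
        (-2 ≤ ⟪v, p - r⟫ / ‖v‖ ∧ ⟪v, p - r⟫ / ‖v‖ ≤ 1)) ∧
      ((-2 ≤ ⟪v, p - r⟫ / ‖v‖ ∧ ⟪v, p - r⟫ / ‖v‖ ≤ 1) ↔
        (-2 * ‖v‖ ≤ ⟪v, p - r⟫ ∧ ⟪v, p - r⟫ ≤ ‖v‖)) := by
  have hvn : (0:ℝ) < ‖v‖ := norm_pos_iff.mpr hv
  have hproj : ∀ w : EuclideanSpace ℝ (Fin n),
      ‖(Submodule.orthogonalProjectionOnto (ℝ ∙ v) w : EuclideanSpace ℝ (Fin n))‖ = |⟪v, w⟫| / ‖v‖ := by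
    intro w
    change ‖(ℝ ∙ v).starProjection w‖ = _
    rw [Submodule.starProjection_singleton, norm_smul, Real.norm_eq_abs, abs_div]
    simp only [RCLike.ofReal_real_eq_id, id_eq, abs_pow, abs_norm]
    field_simp
  have hfr : filter r = ⟪v, p - r⟫ / ‖v‖ := by
    rw [hfilter r, hproj]
    split_ifs with h
    · rw [abs_of_nonneg h]
    · rw [abs_of_neg (lt_of_not_ge h)]; ring
  constructor
  · rw [hS, hD₂, hfr]
    split_ifs with h
    · simp only [ne_eq, one_ne_zero, not_false_iff, true_and]
      constructor
      · intro _; exact h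
      · intro _
        rw [hprob, hS, hD₂, hfr, if_pos h]
        norm_num
    · simp only [ne_eq, not_true_eq_false, false_and, false_iff]
      exact h
  · constructor
    · rintro ⟨h1, h2⟩
      rw [le_div_iff₀ hvn] at h1
      rw [div_le_iff₀ hvn] at h2
      constructor <;> linarith
    · rintro ⟨h1, h2⟩
      constructor
      · rw [le_div_iff₀ hvn]; linarith
      · rw [div_le_iff₀ hvn]; linarith
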